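/- (Sommerfeld solution of the Thomas–Fermi differential equation.) The function ψ(x) = γ_TF³ (3/π)² |x|^{-4} satisfies −(1/4π) Δψ(x) = −γ_TF^{-3/2} ψ(x)^{3/2} for every x ∈ ℝ³ \ {0}. Moreover, it is the only power law that does so: if a ∈ ℝ, b > 0 and the function x ↦ b|x|^{-a} satisfies Δ(b|x|^{-a}) = 4π γ_TF^{-3/2} (b|x|^{-a})^{3/2} for all x ≠ 0, then a = 4 and b = γ_TF³ (3/π)². -/

import Mathlib

open MeasureTheory Real Filter
open scoped ENNReal

noncomputable section

/-- Euclidean space `ℝ³`. -/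
abbrev E3 := EuclideanSpace ℝ (Fin 3)

/-- The Thomas–Fermi constant `γ_TF = (6π²/q)^{2/3}/2` for `q` spin states. -/
def gammaTF (q : ℕ) : ℝ := (6 * Real.pi ^ 2 / q) ^ ((2 : ℝ) / 3) / 2

/-- The Laplacian of `f : ℝ³ → ℝ`, as the sum of the pure second partial derivatives. -/
def lap (f : E3 → ℝ) (x : E3) : ℝ :=
  ∑ i : Fin 3,
    iteratedFDeriv ℝ 2 f x ![EuclideanSpace.single i 1, EuclideanSpace.single i 1]

/-- The real inner product on `ℝ³` as a continuous bilinear map. -/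
def L3 : E3 →L[ℝ] E3 →L[ℝ] ℝ :=
  (isBoundedBilinearMap_inner (𝕜 := ℝ) (E := E3)).toContinuousLinearMap

@[simp] lemma L3_apply (x y : E3) : L3 x y = inner ℝ x y := rfl

lemma innerSL_eq_L3 (y : E3) : (innerSL ℝ y : E3 →L[ℝ] ℝ) = L3 y := by
  ext v; simp

lemma hasFDerivAt_nrpow (c : ℝ) {y : E3} (hy : y ≠ 0) :
    HasFDerivAt (fun z : E3 => ‖z‖ ^ c) ((c * ‖y‖ ^ (c - 2)) • innerSL ℝ y) y := by
  have hny : (0:ℝ) < ‖y‖ := norm_pos_iff.mpr hy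
  have h1 : HasFDerivAt (fun z : E3 => ‖z‖ ^ 2) (2 • innerSL ℝ y) y :=
    (hasStrictFDerivAt_norm_sq y).hasFDerivAt
  have h2 : HasDerivAt (fun t : ℝ => t ^ (c/2)) ((c/2) * (‖y‖^2) ^ (c/2 - 1)) (‖y‖^2) :=
    Real.hasDerivAt_rpow_const (Or.inl (by positivity))
  have h3 := h2.comp_hasFDerivAt y h1
  have heq : (fun z : E3 => ‖z‖ ^ c) = fun z : E3 => ((‖z‖^2 : ℝ)) ^ (c/2) := by
    funext z
    rw [← Real.rpow_natCast ‖z‖ 2, ← Real.rpow_mul (norm_nonneg z)]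
    push_cast
    congr 1
    ring
  have h4 : ((‖y‖^2 : ℝ)) ^ (c/2 - 1) = ‖y‖ ^ (c - 2) := by
    rw [← Real.rpow_natCast ‖y‖ 2, ← Real.rpow_mul (norm_nonneg y)]
    congr 1
    push_cast
    ring
  rw [heq]
  refine h3.congr_fderiv ?_
  ext v
  simp [h4, smul_smul]
  ring

lemma hasFDerivAt_g (b a : ℝ) {y : E3} (hy : y ≠ 0) :
    HasFDerivAt (fun z : E3 => b * ‖z‖ ^ (-a))
      ((b * (-a * ‖y‖ ^ (-a - 2))) • L3 y) y := by
  have h := (hasFDerivAt_nrpow (-a) hy).const_mul b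
  rw [innerSL_eq_L3] at h
  rw [show (b * (-a * ‖y‖ ^ (-a - 2))) • L3 y
      = b • ((-a * ‖y‖ ^ (-a - 2)) • L3 y) by rw [smul_smul]]
  exact h

lemma lap_pow (b a : ℝ) {x : E3} (hx : x ≠ 0) :
    lap (fun y => b * ‖y‖ ^ (-a)) x = b * a * (a - 1) * ‖x‖ ^ (-a - 2) := by
  have hnx : (0:ℝ) < ‖x‖ := norm_pos_iff.mpr hx
  set G : E3 → (E3 →L[ℝ] ℝ) := fun y => (b * (-a * ‖y‖ ^ (-a - 2))) • L3 y with hGdef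
  set c₁ : ℝ := b * (-a * ‖x‖ ^ (-a - 2)) with hc₁
  set c₂ : ℝ := b * (-a * ((-a - 2) * ‖x‖ ^ (-a - 2 - 2))) with hc₂
  have hc : HasFDerivAt (fun y : E3 => b * (-a * ‖y‖ ^ (-a - 2)))
      (c₂ • L3 x) x := by
    have h := ((hasFDerivAt_nrpow (-a - 2) hx).const_mul (-a)).const_mul b
    rw [innerSL_eq_L3] at h
    rw [show (c₂ • L3 x : E3 →L[ℝ] ℝ)
        = b • ((-a) • (((-a - 2) * ‖x‖ ^ (-a - 2 - 2)) • L3 x)) by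
      rw [smul_smul, smul_smul, hc₂]; ring_nf]
    exact h
  have hinner : HasFDerivAt (fun y : E3 => L3 y) L3 x := L3.hasFDerivAt
  have hGd : HasFDerivAt G (c₁ • L3 + (c₂ • L3 x).smulRight (L3 x)) x := hc.smul hinner
  have hev : (fderiv ℝ (fun y : E3 => b * ‖y‖ ^ (-a))) =ᶠ[nhds x] G := by
    filter_upwards [IsOpen.mem_nhds isOpen_compl_singleton hx] with y hy
    exact (hasFDerivAt_g b a hy).fderiv
  have h2 : fderiv ℝ (fderiv ℝ (fun y : E3 => b * ‖y‖ ^ (-a))) x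
      = c₁ • L3 + (c₂ • L3 x).smulRight (L3 x) := by
    rw [hev.fderiv_eq]
    exact hGd.fderiv
  have key : ∀ i : Fin 3,
      iteratedFDeriv ℝ 2 (fun y : E3 => b * ‖y‖ ^ (-a)) x
        ![EuclideanSpace.single i 1, EuclideanSpace.single i 1]
      = c₁ + c₂ * (x i * x i) := by
    intro i
    rw [iteratedFDeriv_two_apply, h2]
    have hvv : (inner ℝ (EuclideanSpace.single i (1:ℝ)) (EuclideanSpace.single i (1:ℝ)) : ℝ)
        = (1:ℝ) := by
      simp [EuclideanSpace.inner_single_left, EuclideanSpace.single_apply]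
    have hxv : (inner ℝ x (EuclideanSpace.single i (1:ℝ)) : ℝ) = x i := by
      simp [EuclideanSpace.inner_single_right]
    simp [ContinuousLinearMap.smul_apply, ContinuousLinearMap.smulRight_apply,
      ContinuousLinearMap.add_apply, hvv, hxv, smul_eq_mul]
    ring
  have hsum : ∑ i : Fin 3, (x i * x i) = ‖x‖ ^ 2 := by
    rw [EuclideanSpace.norm_eq, Real.sq_sqrt (by positivity)]
    simp [Real.norm_eq_abs, sq_abs, sq]
  have hlap : lap (fun y : E3 => b * ‖y‖ ^ (-a)) x = 3 * c₁ + c₂ * ‖x‖ ^ 2 := by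
    unfold lap
    simp only [key]
    rw [Finset.sum_add_distrib, Finset.sum_const, ← Finset.mul_sum, hsum]
    simp
  rw [hlap, hc₁, hc₂]
  have hpow : ‖x‖ ^ (-a - 2 - 2) * ‖x‖ ^ 2 = ‖x‖ ^ (-a - 2) := by
    rw [← Real.rpow_natCast ‖x‖ 2, ← Real.rpow_add hnx]
    norm_num
  have : b * (-a * ((-a - 2) * ‖x‖ ^ (-a - 2 - 2))) * ‖x‖ ^ 2
      = b * (-a * ((-a - 2) * (‖x‖ ^ (-a - 2 - 2) * ‖x‖ ^ 2))) := by ring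
  rw [this, hpow]
  ring

lemma gammaTF_pos {q : ℕ} (hq : 0 < q) : 0 < gammaTF q := by
  have hbase : (0:ℝ) < 6 * Real.pi ^ 2 / q := by
    apply div_pos (by positivity)
    exact_mod_cast hq
  exact div_pos (Real.rpow_pos_of_pos hbase _) two_pos

/-- The Sommerfeld solution: `ψ(x) = γ_TF³ (3/π)² |x|^{−4}` solves the neutral
Thomas–Fermi differential equation `−(1/4π)Δψ = −γ_TF^{−3/2} ψ^{3/2}` away from the
origin, and it is the only power law `b|x|^{−a}` (with `b > 0`) that does so. -/
theorem sommerfeld_solution (q : ℕ) (hq : 0 < q) :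
    (∀ x : E3, x ≠ 0 →
      -(1 / (4 * Real.pi)) *
          lap (fun y => gammaTF q ^ 3 * (3 / Real.pi) ^ 2 * ‖y‖ ^ (-(4 : ℝ))) x
        = -(gammaTF q ^ (-(3 : ℝ) / 2)) *
            (gammaTF q ^ 3 * (3 / Real.pi) ^ 2 * ‖x‖ ^ (-(4 : ℝ))) ^ ((3 : ℝ) / 2)) ∧
    (∀ a b : ℝ, 0 < b →
      (∀ x : E3, x ≠ 0 →
        lap (fun y => b * ‖y‖ ^ (-a)) x
          = 4 * Real.pi * gammaTF q ^ (-(3 : ℝ) / 2) * (b * ‖x‖ ^ (-a)) ^ ((3 : ℝ) / 2)) →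
      a = 4 ∧ b = gammaTF q ^ 3 * (3 / Real.pi) ^ 2) := by
  have hγ : 0 < gammaTF q := gammaTF_pos hq
  have hπ : 0 < Real.pi := Real.pi_pos
  set γ := gammaTF q with hγdef
  constructor
  · intro x hx
    have hnx : (0:ℝ) < ‖x‖ := norm_pos_iff.mpr hx
    have hb₀ : (0:ℝ) < γ ^ 3 * (3 / Real.pi) ^ 2 := by positivity
    rw [lap_pow (γ ^ 3 * (3 / Real.pi) ^ 2) 4 hx]
    have e1 : ((γ ^ 3 : ℝ)) ^ ((3:ℝ)/2) = γ ^ ((9:ℝ)/2) := by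
      rw [← Real.rpow_natCast γ 3, ← Real.rpow_mul hγ.le,
        show ((3:ℕ):ℝ) * ((3:ℝ)/2) = (9:ℝ)/2 by push_cast; ring]
    have e2 : (((3 / Real.pi) ^ 2 : ℝ)) ^ ((3:ℝ)/2) = 27 / Real.pi ^ 3 := by
      rw [← Real.rpow_natCast (3 / Real.pi) 2, ← Real.rpow_mul (by positivity),
        show ((2:ℕ):ℝ) * ((3:ℝ)/2) = ((3:ℕ):ℝ) by push_cast; ring,
        Real.rpow_natCast, div_pow]
      norm_num
    have e3 : (‖x‖ ^ (-(4:ℝ))) ^ ((3:ℝ)/2) = ‖x‖ ^ (-(6:ℝ)) := by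
      rw [← Real.rpow_mul (norm_nonneg x),
        show (-(4:ℝ)) * ((3:ℝ)/2) = -(6:ℝ) by ring]
    have h1 : (γ ^ 3 * (3 / Real.pi) ^ 2 * ‖x‖ ^ (-(4:ℝ))) ^ ((3:ℝ)/2)
        = γ ^ ((9:ℝ)/2) * (27 / Real.pi ^ 3) * ‖x‖ ^ (-(6:ℝ)) := by
      rw [Real.mul_rpow hb₀.le (Real.rpow_nonneg (norm_nonneg x) _),
          Real.mul_rpow (by positivity) (by positivity), e1, e2, e3]
    rw [h1]
    have h2 : γ ^ (-(3:ℝ)/2) * γ ^ ((9:ℝ)/2) = γ ^ (3:ℕ) := by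
      rw [← Real.rpow_add hγ, ← Real.rpow_natCast γ 3]
      norm_num
    have h3 : ‖x‖ ^ (-(4:ℝ) - 2) = ‖x‖ ^ (-(6:ℝ)) := by norm_num
    rw [h3]
    rw [show -(γ ^ (-(3:ℝ)/2)) * (γ ^ ((9:ℝ)/2) * (27 / Real.pi ^ 3) * ‖x‖ ^ (-(6:ℝ)))
        = -((γ ^ (-(3:ℝ)/2) * γ ^ ((9:ℝ)/2)) * ((27 / Real.pi ^ 3) * ‖x‖ ^ (-(6:ℝ)))) by ring,
      h2]
    field_simp
    ring
  · intro a b hb hsol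
    set K : ℝ := 4 * Real.pi * γ ^ (-(3:ℝ)/2) * b ^ ((3:ℝ)/2) with hK
    have hKpos : 0 < K :=
      mul_pos (mul_pos (by positivity) (Real.rpow_pos_of_pos hγ _))
        (Real.rpow_pos_of_pos hb _)
    have gen : ∀ x : E3, x ≠ 0 →
        b * a * (a - 1) * ‖x‖ ^ (-a - 2) = K * ‖x‖ ^ (-a * ((3:ℝ)/2)) := by
      intro x hx
      have h := hsol x hx
      rw [lap_pow b a hx] at h
      rw [h, Real.mul_rpow hb.le (Real.rpow_nonneg (norm_nonneg x) _),
          ← Real.rpow_mul (norm_nonneg x), hK]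
      ring
    have hone : (EuclideanSpace.single (0 : Fin 3) (1:ℝ)) ≠ 0 := by
      intro h
      have := congrArg norm h
      simp at this
    have htwo : (EuclideanSpace.single (0 : Fin 3) (2:ℝ)) ≠ 0 := by
      intro h
      have := congrArg norm h
      simp at this
    have hn1 : ‖(EuclideanSpace.single (0 : Fin 3) (1:ℝ))‖ = 1 := by simp
    have hn2 : ‖(EuclideanSpace.single (0 : Fin 3) (2:ℝ))‖ = 2 := by
      simp [Real.norm_eq_abs]
    have h1 := gen _ hone
    rw [hn1] at h1
    simp only [Real.one_rpow, mul_one] at h1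
    have h2 := gen _ htwo
    rw [hn2] at h2
    rw [h1] at h2
    have hexp : (2:ℝ) ^ (-a - 2) = 2 ^ (-a * ((3:ℝ)/2)) :=
      mul_left_cancel₀ hKpos.ne' h2
    have ha : a = 4 := by
      have hle1 : -a - 2 ≤ -a * ((3:ℝ)/2) :=
        (Real.rpow_le_rpow_left_iff (x := 2) one_lt_two).mp hexp.le
      have hle2 : -a * ((3:ℝ)/2) ≤ -a - 2 :=
        (Real.rpow_le_rpow_left_iff (x := 2) one_lt_two).mp hexp.ge
      nlinarith
    subst ha
    refine ⟨rfl, ?_⟩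
    set s : ℝ := b ^ ((1:ℝ)/2) with hs
    set γp : ℝ := γ ^ ((3:ℝ)/2) with hγp
    have hγ32 : γ ^ (-(3:ℝ)/2) * γp = 1 := by
      rw [hγp, ← Real.rpow_add hγ]
      norm_num
    have hbb : b ^ ((3:ℝ)/2) = b * s := by
      rw [hs, show (3:ℝ)/2 = 1 + 1/2 by norm_num, Real.rpow_add hb, Real.rpow_one]
    have h12 : b * 4 * (4 - 1) = 4 * Real.pi * γ ^ (-(3:ℝ)/2) * (b * s) := by
      rw [h1, hK, hbb]
    have h13 : 4 * Real.pi * b * s = 12 * b * γp := by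
      linear_combination (-(γp)) * h12 - (4 * Real.pi * b * s) * hγ32
    have hsv : s = 3 * γp / Real.pi := by
      have h4b : (4 * b) ≠ 0 := by positivity
      have : (Real.pi * s) * (4 * b) = (3 * γp) * (4 * b) := by linarith [h13]
      have hps : Real.pi * s = 3 * γp := mul_right_cancel₀ h4b this
      field_simp
      linarith [hps]
    have hb2 : s * s = b := by
      rw [hs, ← Real.rpow_add hb]
      norm_num
    have hγp2 : γp * γp = γ ^ (3:ℕ) := by
      rw [hγp, ← Real.rpow_add hγ, ← Real.rpow_natCast γ 3]
      norm_num
    rw [← hb2, hsv]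
    field_simp
    linear_combination hγp2


end
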